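/- Pointwise Carleman estimate for ∂_t + L (inequality (5.23)): there exists C = C(T, μ₁) > 0 such that for every function u of class C³ on the closure of Q_T, all λ > 0 and s > 1, the following pointwise inequality holds on Q_T: (u_t + Lu)² φ_{λ,s}² ≥ (u_t²/4 + (Lu)²) φ_{λ,s}² + C λ s (t+2)^{s−1} |∇u|² φ_{λ,s}² + (λ² s²/2)(t+2)^{2s−2} u² φ_{λ,s}² + Σ_i ∂_{x_i}[ −2λ s (t+2)^{s−1} Σ_j a_ij u_{x_j} u φ_{λ,s}² + 2 Σ_j a_ij u_{x_j} (u_t + λ s (t+2)^{s−1} u) φ_{λ,s}² ] + ∂_t[ −λ s (t+2)^{s−1} u² φ_{λ,s}² − Σ_{i,j} a_ij u_{x_j} u_{x_i} φ_{λ,s}² ]. -/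

import Mathlib

open MeasureTheory Real Set

noncomputable section

/-- partial derivative in the `i`-th coordinate direction -/
def pd {n : ℕ} (i : Fin n) (f : (Fin n → ℝ) → ℝ) (x : Fin n → ℝ) : ℝ :=
  fderiv ℝ f x (Pi.single i 1)

/-- squared euclidean norm of the spatial gradient -/
def gradSq {n : ℕ} (f : (Fin n → ℝ) → ℝ) (x : Fin n → ℝ) : ℝ :=
  ∑ i, (pd i f x) ^ 2

/-- divergence form elliptic operator `Lu = Σ_{i,j} ∂_i (a_ij ∂_j u)` -/
def ellOp {n : ℕ} (a : Fin n → Fin n → (Fin n → ℝ) → ℝ)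
    (f : (Fin n → ℝ) → ℝ) (x : Fin n → ℝ) : ℝ :=
  ∑ i, ∑ j, pd i (fun y => a i j y * pd j f y) x

/-- open unit cube -/
def cube (n : ℕ) : Set (Fin n → ℝ) := {x | ∀ i, x i ∈ Ioo (0:ℝ) 1}

/-- closed unit cube -/
def cubeCl (n : ℕ) : Set (Fin n → ℝ) := {x | ∀ i, x i ∈ Icc (0:ℝ) 1}

/-- Carleman weight `exp (λ (t+2)^s)` -/
def cwf (lam s t : ℝ) : ℝ := Real.exp (lam * (t + 2) ^ s)

/-- symmetric, `C¹`, uniformly elliptic coefficients on the closed cube -/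
def Elliptic {n : ℕ} (a : Fin n → Fin n → (Fin n → ℝ) → ℝ) (μ₁ μ₂ : ℝ) : Prop :=
  (∀ i j, ContDiffOn ℝ 1 (a i j) (cubeCl n)) ∧
  (∀ i j x, a i j x = a j i x) ∧
  (∀ x ∈ cubeCl n, ∀ ξ : Fin n → ℝ,
      μ₁ * ∑ i, ξ i ^ 2 ≤ ∑ i, ∑ j, a i j x * ξ i * ξ j ∧
      ∑ i, ∑ j, a i j x * ξ i * ξ j ≤ μ₂ * ∑ i, ξ i ^ 2)

/-- the regularity class `C^{2,1}` on the closure of `Q_T` -/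
def C21 (n : ℕ) (T : ℝ) (u : (Fin n → ℝ) → ℝ → ℝ) : Prop :=
  ContinuousOn (fun p : (Fin n → ℝ) × ℝ => u p.1 p.2) (cubeCl n ×ˢ Icc 0 T) ∧
  (∀ t ∈ Icc (0:ℝ) T, ContDiffOn ℝ 2 (fun x => u x t) (cubeCl n)) ∧
  (∀ x ∈ cubeCl n, ContDiffOn ℝ 1 (u x) (Icc 0 T))

/-- the admissible class `H`: `C^{2,1}` functions vanishing on `Γ₀ × (0,T)` with
vanishing conormal derivative on `Γ₁ × (0,T)` -/
def Adm (n : ℕ) [NeZero n] (T : ℝ) (a : Fin n → Fin n → (Fin n → ℝ) → ℝ)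
    (u : (Fin n → ℝ) → ℝ → ℝ) : Prop :=
  C21 n T u ∧
  (∀ x ∈ cubeCl n, x 0 = 1 → ∀ t ∈ Icc (0:ℝ) T, u x t = 0) ∧
  (∀ x ∈ cubeCl n, ∀ t ∈ Icc (0:ℝ) T, ∀ i : Fin n,
      (x i = 0 ∨ (x i = 1 ∧ i ≠ 0)) →
      ∑ j, a i j x * pd j (fun y => u y t) x = 0)

/-! ### Auxiliary lemmas for partial derivatives -/

lemma pd_congr_nhds {n : ℕ} {f g : (Fin n → ℝ) → ℝ} {x : Fin n → ℝ}
    (h : f =ᶠ[nhds x] g) (i : Fin n) : pd i f x = pd i g x := by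
  unfold pd; rw [Filter.EventuallyEq.fderiv_eq h]

lemma pd_mul' {n : ℕ} {f g : (Fin n → ℝ) → ℝ} {x : Fin n → ℝ}
    (hf : DifferentiableAt ℝ f x) (hg : DifferentiableAt ℝ g x) (i : Fin n) :
    pd i (fun y => f y * g y) x = f x * pd i g x + g x * pd i f x := by
  unfold pd; rw [fderiv_fun_mul hf hg]; simp

lemma pd_mul_const' {n : ℕ} {f : (Fin n → ℝ) → ℝ} {x : Fin n → ℝ}
    (hf : DifferentiableAt ℝ f x) (c : ℝ) (i : Fin n) :
    pd i (fun y => f y * c) x = pd i f x * c := by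
  unfold pd; rw [fderiv_mul_const hf]; simp [mul_comm]

lemma pd_sum' {n : ℕ} {ι : Type*} (s : Finset ι) {f : ι → (Fin n → ℝ) → ℝ} {x : Fin n → ℝ}
    (hf : ∀ j ∈ s, DifferentiableAt ℝ (f j) x) (i : Fin n) :
    pd i (fun y => ∑ j ∈ s, f j y) x = ∑ j ∈ s, pd i (f j) x := by
  unfold pd; rw [fderiv_fun_sum hf]; simp
set_option maxHeartbeats 2000000 in
/-- **Pointwise Carleman estimate (5.23)** for the operator `∂_t + L`. -/
theorem pointwise_carleman_forward (n : ℕ) [NeZero n] (T μ₁ : ℝ) (hT : 0 < T) (hμ₁ : 0 < μ₁) :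
    ∃ C : ℝ, 0 < C ∧
      ∀ (μ₂ : ℝ), μ₁ ≤ μ₂ →
      ∀ (a : Fin n → Fin n → (Fin n → ℝ) → ℝ), Elliptic a μ₁ μ₂ →
      ∀ (u : (Fin n → ℝ) → ℝ → ℝ),
        ContDiffOn ℝ 3 (fun p : (Fin n → ℝ) × ℝ => u p.1 p.2) (cubeCl n ×ˢ Icc 0 T) →
      ∀ (lam s : ℝ), 0 < lam → 1 < s →
      ∀ x ∈ cube n, ∀ t ∈ Ioo (0:ℝ) T,
      (deriv (u x) t + ellOp a (fun y => u y t) x) ^ 2 * cwf lam s t ^ 2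
      ≥ ((deriv (u x) t) ^ 2 / 4 + (ellOp a (fun y => u y t) x) ^ 2) * cwf lam s t ^ 2
        + C * lam * s * (t + 2) ^ (s - 1) * gradSq (fun y => u y t) x * cwf lam s t ^ 2
        + lam ^ 2 * s ^ 2 / 2 * (t + 2) ^ (2 * s - 2) * u x t ^ 2 * cwf lam s t ^ 2
        + (∑ i, pd i (fun y =>
            (-(2 * lam * s * (t + 2) ^ (s - 1))) *
              (∑ j, a i j y * pd j (fun z => u z t) y) * u y t * cwf lam s t ^ 2
            + 2 * (∑ j, a i j y * pd j (fun z => u z t) y) *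
                (deriv (u y) t + lam * s * (t + 2) ^ (s - 1) * u y t) * cwf lam s t ^ 2) x)
        + deriv (fun τ =>
            (-(lam * s * (τ + 2) ^ (s - 1))) * u x τ ^ 2 * cwf lam s τ ^ 2
            - (∑ i, ∑ j, a i j x * pd j (fun z => u z τ) x * pd i (fun z => u z τ) x)
                * cwf lam s τ ^ 2) t := by
  classical
  refine ⟨μ₁, hμ₁, ?_⟩
  intro μ₂ hμ₂ a hE u hu lam s hlam hs x hx t ht
  obtain ⟨ha1, ha2, ha3⟩ := hE
  set F : (Fin n → ℝ) × ℝ → ℝ := fun p => u p.1 p.2 with hFdef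
  have huF : ContDiffOn ℝ 3 F (cubeCl n ×ˢ Icc 0 T) := hu
  -- basic topology
  have hcube_open : IsOpen (cube n) := by
    have h : cube n = Set.pi Set.univ (fun _ : Fin n => Ioo (0:ℝ) 1) := by
      ext y; simp [cube, Set.mem_pi]
    rw [h]; exact isOpen_set_pi Set.finite_univ (fun _ _ => isOpen_Ioo)
  have hsubc : cube n ⊆ cubeCl n := fun y hy i => Ioo_subset_Icc_self (hy i)
  have hO : IsOpen (cube n ×ˢ Ioo (0:ℝ) T) := hcube_open.prod isOpen_Ioo
  have hsub : (cube n ×ˢ Ioo (0:ℝ) T) ⊆ cubeCl n ×ˢ Icc 0 T := by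
    rintro ⟨y, τ⟩ ⟨hy, hτ⟩
    exact ⟨hsubc hy, Ioo_subset_Icc_self hτ⟩
  have hmem : (x, t) ∈ cube n ×ˢ Ioo (0:ℝ) T := ⟨hx, ht⟩
  have hF3 : ∀ p ∈ cube n ×ˢ Ioo (0:ℝ) T, ContDiffAt ℝ 3 F p := fun p hp =>
    huF.contDiffAt (Filter.mem_of_superset (hO.mem_nhds hp) hsub)
  have hFd : ∀ p ∈ cube n ×ˢ Ioo (0:ℝ) T, DifferentiableAt ℝ F p := fun p hp =>
    (hF3 p hp).differentiableAt (by norm_num)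
  have hF2' : ContDiffAt ℝ 2 (fderiv ℝ F) (x, t) := (hF3 _ hmem).fderiv_right (by norm_num)
  have hdF : DifferentiableAt ℝ (fderiv ℝ F) (x, t) := hF2'.differentiableAt (by norm_num)
  have hDiffApp : ∀ (v : (Fin n → ℝ) × ℝ) (p : (Fin n → ℝ) × ℝ),
      p ∈ cube n ×ˢ Ioo (0:ℝ) T → DifferentiableAt ℝ (fun q => fderiv ℝ F q v) p :=
    fun v p hp => (((hF3 p hp).fderiv_right (by norm_num : (1:WithTop ℕ∞) + 1 ≤ 3)).differentiableAt
      (by norm_num)).clm_apply (differentiableAt_const v)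
  have hmix : ∀ v w, fderiv ℝ (fun q => fderiv ℝ F q v) (x, t) w
      = fderiv ℝ (fderiv ℝ F) (x, t) w v := by
    intro v w
    rw [fderiv_clm_apply hdF (differentiableAt_const v)]
    simp
  have hsym : ∀ v w, fderiv ℝ (fderiv ℝ F) (x, t) v w = fderiv ℝ (fderiv ℝ F) (x, t) w v :=
    (hF3 _ hmem).isSymmSndFDerivAt (by norm_num)
  -- first-order directional facts
  have hval2 : ∀ y ∈ cube n, ∀ τ ∈ Ioo (0:ℝ) T,
      HasDerivAt (u y) (fderiv ℝ F (y, τ) (0, 1)) τ := by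
    intro y hy τ hτ
    have hc : HasDerivAt (fun τ' : ℝ => ((y, τ') : (Fin n → ℝ) × ℝ)) ((0 : Fin n → ℝ), (1:ℝ)) τ :=
      (hasDerivAt_const τ y).prodMk (hasDerivAt_id τ)
    exact (hFd (y, τ) ⟨hy, hτ⟩).hasFDerivAt.comp_hasDerivAt τ hc
  have hval1 : ∀ y ∈ cube n, ∀ τ ∈ Ioo (0:ℝ) T, ∀ j : Fin n,
      pd j (fun z => u z τ) y = fderiv ℝ F (y, τ) (Pi.single j 1, 0) := by
    intro y hy τ hτ j
    have h2 := (hFd (y, τ) ⟨hy, hτ⟩).hasFDerivAt.comp y (hasFDerivAt_prodMk_left (𝕜 := ℝ) y τ)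
    unfold pd
    rw [show (fun z => u z τ) = F ∘ (fun z : Fin n → ℝ => (z, τ)) from rfl, h2.fderiv]
    simp
  have hnx : cube n ∈ nhds x := hcube_open.mem_nhds hx
  have hDvt : ∀ j : Fin n, pd j (fun z => u z t) x = fderiv ℝ F (x, t) (Pi.single j 1, 0) :=
    fun j => hval1 x hx t ht j
  -- spatial differentiability of the coefficient and derivative fields
  have hdiffa : ∀ i j, DifferentiableAt ℝ (a i j) x := fun i j =>
    ((ha1 i j).contDiffAt (Filter.mem_of_superset hnx hsubc)).differentiableAt one_ne_zero
  have hDf : ∀ v : (Fin n → ℝ) × ℝ, DifferentiableAt ℝ (fun y => fderiv ℝ F (y, t) v) x :=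
    fun v => (hDiffApp v (x, t) hmem).comp (g := fun q => fderiv ℝ F q v) (f := fun z : Fin n → ℝ => (z, t)) x ((hasFDerivAt_prodMk_left (𝕜 := ℝ) x t).differentiableAt)
  have hpdDf : ∀ (v : (Fin n → ℝ) × ℝ) (i : Fin n),
      pd i (fun y => fderiv ℝ F (y, t) v) x
      = fderiv ℝ (fderiv ℝ F) (x, t) (Pi.single i 1, 0) v := by
    intro v i
    have h2 := (hDiffApp v (x, t) hmem).hasFDerivAt.comp x (hasFDerivAt_prodMk_left (𝕜 := ℝ) x t)
    unfold pd
    rw [show (fun y => fderiv ℝ F (y, t) v)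
        = (fun q => fderiv ℝ F q v) ∘ (fun z : Fin n → ℝ => (z, t)) from rfl, h2.fderiv]
    simp [hmix]
  have hpdW : ∀ i : Fin n, pd i (fun y => fderiv ℝ F (y, t) (0, 1)) x
      = fderiv ℝ (fderiv ℝ F) (x, t) ((0 : Fin n → ℝ), (1:ℝ)) (Pi.single i 1, 0) :=
    fun i => (hpdDf (0, 1) i).trans (hsym _ _)
  -- time derivative of spatial partials
  have hPd : ∀ j : Fin n, HasDerivAt (fun τ => pd j (fun z => u z τ) x)
      (fderiv ℝ (fderiv ℝ F) (x, t) ((0 : Fin n → ℝ), (1:ℝ)) (Pi.single j 1, 0)) t := by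
    intro j
    have hc : HasDerivAt (fun τ' : ℝ => ((x, τ') : (Fin n → ℝ) × ℝ)) ((0 : Fin n → ℝ), (1:ℝ)) t :=
      (hasDerivAt_const t x).prodMk (hasDerivAt_id t)
    have h2 := (hDiffApp (Pi.single j 1, 0) (x, t) hmem).hasFDerivAt.comp_hasDerivAt t hc
    rw [hmix] at h2
    refine h2.congr_of_eventuallyEq ?_
    filter_upwards [Ioo_mem_nhds ht.1 ht.2] with τ hτ
    exact hval1 x hx τ hτ j
  -- positivity basics
  have ht2 : (0:ℝ) < t + 2 := by linarith [ht.1]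
  have hXpos : (0:ℝ) < (t + 2) ^ (s - 1) := Real.rpow_pos_of_pos ht2 _
  have hYnn : (0:ℝ) ≤ (t + 2) ^ (s - 2) := (Real.rpow_pos_of_pos ht2 _).le
  have hφ2pos : (0:ℝ) < cwf lam s t ^ 2 := by
    unfold cwf; positivity
  -- ellipticity at x
  have hell := (ha3 x (hsubc hx) (fun i => fderiv ℝ F (x, t) (Pi.single i 1, 0))).1
  -- spatial divergence term
  have hellOp_eq : ellOp a (fun y => u y t) x
      = ∑ i, ∑ j, pd i (fun y => a i j y * pd j (fun z => u z t) y) x := rfl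
  have hBdiff : ∀ i, DifferentiableAt ℝ
      (fun y => ∑ j, a i j y * fderiv ℝ F (y, t) (Pi.single j 1, 0)) x :=
    fun i => DifferentiableAt.fun_sum fun j _ => (hdiffa i j).fun_mul (hDf (Pi.single j 1, 0))
  have hSi : ∀ i, pd i (fun y =>
        (-(2 * lam * s * (t + 2) ^ (s - 1))) *
          (∑ j, a i j y * pd j (fun z => u z t) y) * u y t * cwf lam s t ^ 2
        + 2 * (∑ j, a i j y * pd j (fun z => u z t) y) *
            (deriv (u y) t + lam * s * (t + 2) ^ (s - 1) * u y t) * cwf lam s t ^ 2) x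
      = ((∑ j, a i j x * fderiv ℝ F (x, t) (Pi.single j 1, 0))
            * fderiv ℝ (fderiv ℝ F) (x, t) ((0 : Fin n → ℝ), (1:ℝ)) (Pi.single i 1, 0)
          + fderiv ℝ F (x, t) (0, 1)
            * (∑ j, pd i (fun y => a i j y * pd j (fun z => u z t) y) x))
        * (2 * cwf lam s t ^ 2) := by
    intro i
    have hEq : (fun y =>
        (-(2 * lam * s * (t + 2) ^ (s - 1))) *
          (∑ j, a i j y * pd j (fun z => u z t) y) * u y t * cwf lam s t ^ 2
        + 2 * (∑ j, a i j y * pd j (fun z => u z t) y) *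
            (deriv (u y) t + lam * s * (t + 2) ^ (s - 1) * u y t) * cwf lam s t ^ 2)
        =ᶠ[nhds x] (fun y =>
          (∑ j, a i j y * fderiv ℝ F (y, t) (Pi.single j 1, 0))
            * fderiv ℝ F (y, t) (0, 1) * (2 * cwf lam s t ^ 2)) := by
      filter_upwards [hnx] with y hy
      have h2 : deriv (u y) t = fderiv ℝ F (y, t) (0, 1) := (hval2 y hy t ht).deriv
      have h1 : ∀ j : Fin n, pd j (fun z => u z t) y = fderiv ℝ F (y, t) (Pi.single j 1, 0) :=
        hval1 y hy t ht
      simp only [h1, h2]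
      ring
    rw [pd_congr_nhds hEq i]
    rw [pd_mul_const' (f := fun y => (∑ j, a i j y * fderiv ℝ F (y, t) (Pi.single j 1, 0))
          * fderiv ℝ F (y, t) (0, 1)) ((hBdiff i).fun_mul (hDf (0, 1))) (2 * cwf lam s t ^ 2) i]
    rw [pd_mul' (hBdiff i) (hDf (0, 1)) i]
    rw [hpdW i]
    rw [pd_sum' Finset.univ (fun j _ => (hdiffa i j).fun_mul (hDf (Pi.single j 1, 0))) i]
    have hswapj : ∀ j : Fin n,
        pd i (fun y => a i j y * fderiv ℝ F (y, t) (Pi.single j 1, 0)) x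
        = pd i (fun y => a i j y * pd j (fun z => u z t) y) x := by
      intro j
      refine (pd_congr_nhds ?_ i).symm
      filter_upwards [hnx] with y hy
      rw [hval1 y hy t ht j]
    simp only [hswapj]
  have hSsum : (∑ i, pd i (fun y =>
        (-(2 * lam * s * (t + 2) ^ (s - 1))) *
          (∑ j, a i j y * pd j (fun z => u z t) y) * u y t * cwf lam s t ^ 2
        + 2 * (∑ j, a i j y * pd j (fun z => u z t) y) *
            (deriv (u y) t + lam * s * (t + 2) ^ (s - 1) * u y t) * cwf lam s t ^ 2) x)
      = 2 * cwf lam s t ^ 2 * (ellOp a (fun y => u y t) x * fderiv ℝ F (x, t) (0, 1))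
        + 2 * cwf lam s t ^ 2 * (∑ i, (∑ j, a i j x * fderiv ℝ F (x, t) (Pi.single j 1, 0))
            * fderiv ℝ (fderiv ℝ F) (x, t) ((0 : Fin n → ℝ), (1:ℝ)) (Pi.single i 1, 0)) := by
    rw [Finset.sum_congr rfl fun i _ => hSi i, hellOp_eq]
    simp only [add_mul]
    rw [Finset.sum_add_distrib, ← Finset.sum_mul, ← Finset.sum_mul, ← Finset.mul_sum]
    ring
  -- time derivative term
  have h0t : HasDerivAt (fun τ : ℝ => τ + 2) 1 t := (hasDerivAt_id t).add_const 2
  have hX' : HasDerivAt (fun τ : ℝ => (τ + 2) ^ (s - 1)) ((s - 1) * (t + 2) ^ (s - 2)) t := by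
    have h1 := (Real.hasDerivAt_rpow_const (x := t + 2) (p := s - 1)
      (Or.inl (ne_of_gt ht2))).comp t h0t
    simpa [Function.comp_def, show s - 1 - 1 = s - 2 by ring] using h1
  have hXs : HasDerivAt (fun τ : ℝ => (τ + 2) ^ s) (s * (t + 2) ^ (s - 1)) t := by
    simpa [Function.comp_def] using (Real.hasDerivAt_rpow_const (x := t + 2) (p := s)
      (Or.inl (ne_of_gt ht2))).comp t h0t
  have hφ2' : HasDerivAt (fun τ => cwf lam s τ ^ 2)
      (2 * (lam * s * (t + 2) ^ (s - 1)) * cwf lam s t ^ 2) t := by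
    have hφ' : HasDerivAt (fun τ => cwf lam s τ)
        (lam * s * (t + 2) ^ (s - 1) * cwf lam s t) t := by
      unfold cwf
      have h2 := (hXs.const_mul lam).exp
      convert h2 using 1
      ring
    have h2 := hφ'.fun_pow 2
    refine h2.congr_deriv ?_
    push_cast
    ring
  have hu' : HasDerivAt (u x) (fderiv ℝ F (x, t) (0, 1)) t := hval2 x hx t ht
  have hu2' : HasDerivAt (fun τ => u x τ ^ 2) (2 * u x t * fderiv ℝ F (x, t) (0, 1)) t := by
    have h2 := hu'.fun_pow 2
    refine h2.congr_deriv ?_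
    push_cast
    ring
  have h1' : HasDerivAt (fun τ => -(lam * s * (τ + 2) ^ (s - 1)))
      (-(lam * s * ((s - 1) * (t + 2) ^ (s - 2)))) t := (hX'.const_mul (lam * s)).fun_neg
  have hQ' : HasDerivAt (fun τ => (∑ i, ∑ j, a i j x * pd j (fun z => u z τ) x
        * pd i (fun z => u z τ) x))
      (∑ i, ∑ j, (a i j x * fderiv ℝ (fderiv ℝ F) (x, t) ((0:Fin n → ℝ), (1:ℝ)) (Pi.single j 1, 0)
          * fderiv ℝ F (x, t) (Pi.single i 1, 0)
        + a i j x * fderiv ℝ F (x, t) (Pi.single j 1, 0)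
          * fderiv ℝ (fderiv ℝ F) (x, t) ((0:Fin n → ℝ), (1:ℝ)) (Pi.single i 1, 0))) t := by
    refine HasDerivAt.fun_sum fun i _ => HasDerivAt.fun_sum fun j _ => ?_
    have h := ((hPd j).const_mul (a i j x)).fun_mul (hPd i)
    refine h.congr_deriv ?_
    rw [hDvt i, hDvt j]
  have hbig := ((h1'.fun_mul hu2').fun_mul hφ2').fun_sub (hQ'.fun_mul hφ2')
  have hderiv := hbig.deriv
  -- auxiliary rewrites for the goal
  have hut : deriv (u x) t = fderiv ℝ F (x, t) (0, 1) := hu'.deriv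
  have hgrad : gradSq (fun y => u y t) x = ∑ i, fderiv ℝ F (x, t) (Pi.single i 1, 0) ^ 2 := by
    unfold gradSq
    exact Finset.sum_congr rfl fun i _ => by rw [hDvt i]
  have hZ : (t + 2) ^ (2 * s - 2) = ((t + 2) ^ (s - 1)) ^ 2 := by
    rw [show (2 * s - 2) = (s - 1) * 2 by ring, Real.rpow_mul ht2.le,
      show ((2:ℝ)) = ((2:ℕ):ℝ) by norm_num, Real.rpow_natCast]
  have hRsym : (∑ i, ∑ j, a i j x
        * fderiv ℝ (fderiv ℝ F) (x, t) ((0:Fin n → ℝ), (1:ℝ)) (Pi.single j 1, 0)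
        * fderiv ℝ F (x, t) (Pi.single i 1, 0))
      = ∑ i, ∑ j, a i j x * fderiv ℝ F (x, t) (Pi.single j 1, 0)
        * fderiv ℝ (fderiv ℝ F) (x, t) ((0:Fin n → ℝ), (1:ℝ)) (Pi.single i 1, 0) := by
    rw [Finset.sum_comm]
    exact Finset.sum_congr rfl fun j _ => Finset.sum_congr rfl fun i _ => by
      rw [ha2 i j x]; ring
  have hRsum : (∑ i, ∑ j, (a i j x
        * fderiv ℝ (fderiv ℝ F) (x, t) ((0:Fin n → ℝ), (1:ℝ)) (Pi.single j 1, 0)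
        * fderiv ℝ F (x, t) (Pi.single i 1, 0)
      + a i j x * fderiv ℝ F (x, t) (Pi.single j 1, 0)
        * fderiv ℝ (fderiv ℝ F) (x, t) ((0:Fin n → ℝ), (1:ℝ)) (Pi.single i 1, 0)))
      = 2 * ∑ i, (∑ j, a i j x * fderiv ℝ F (x, t) (Pi.single j 1, 0))
          * fderiv ℝ (fderiv ℝ F) (x, t) ((0:Fin n → ℝ), (1:ℝ)) (Pi.single i 1, 0) := by
    simp only [Finset.sum_add_distrib]
    rw [hRsym]
    simp only [Finset.sum_mul]
    ring
  rw [ge_iff_le, hut, hgrad, hZ, hSsum, hderiv]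
  simp only [hDvt]
  rw [hRsum]
  -- final algebraic inequality
  have hellQ : μ₁ * (∑ i, fderiv ℝ F (x, t) (Pi.single i 1, 0) ^ 2)
      ≤ ∑ i, ∑ j, a i j x * fderiv ℝ F (x, t) (Pi.single j 1, 0)
          * fderiv ℝ F (x, t) (Pi.single i 1, 0) := by
    refine le_trans hell (le_of_eq ?_)
    rw [Finset.sum_comm]
    exact Finset.sum_congr rfl fun j _ => Finset.sum_congr rfl fun i _ => by
      rw [ha2 i j x]
  have hGnn : (0:ℝ) ≤ ∑ i, fderiv ℝ F (x, t) (Pi.single i 1, 0) ^ 2 :=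
    Finset.sum_nonneg fun i _ => sq_nonneg _
  have hspos : (0:ℝ) < s := by linarith
  have hs1 : (0:ℝ) ≤ s - 1 := by linarith
  have hσpos : (0:ℝ) < lam * s * (t + 2) ^ (s - 1) := mul_pos (mul_pos hlam hspos) hXpos
  have f1 : (0:ℝ) ≤ (3 * fderiv ℝ F (x, t) (0, 1)
        + 4 * (lam * s * (t + 2) ^ (s - 1)) * u x t) ^ 2 * cwf lam s t ^ 2 :=
    mul_nonneg (sq_nonneg _) hφ2pos.le
  have p1 : (0:ℝ) ≤ ((∑ i, ∑ j, a i j x * fderiv ℝ F (x, t) (Pi.single j 1, 0)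
          * fderiv ℝ F (x, t) (Pi.single i 1, 0))
        - μ₁ * ∑ i, fderiv ℝ F (x, t) (Pi.single i 1, 0) ^ 2)
        * (lam * s * (t + 2) ^ (s - 1) * cwf lam s t ^ 2) :=
    mul_nonneg (by linarith [hellQ]) (mul_pos hσpos hφ2pos).le
  have p2 : (0:ℝ) ≤ lam * s * (s - 1) * (t + 2) ^ (s - 2) * u x t ^ 2 * cwf lam s t ^ 2 :=
    mul_nonneg (mul_nonneg (mul_nonneg (mul_nonneg
      (mul_nonneg hlam.le hspos.le) hs1) hYnn) (sq_nonneg _)) hφ2pos.le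
  have p3 : (0:ℝ) ≤ (lam * s * (t + 2) ^ (s - 1)) ^ 2 * u x t ^ 2 * cwf lam s t ^ 2 :=
    mul_nonneg (mul_nonneg (sq_nonneg _) (sq_nonneg _)) hφ2pos.le
  have p4 : (0:ℝ) ≤ μ₁ * (lam * s * (t + 2) ^ (s - 1))
        * (∑ i, fderiv ℝ F (x, t) (Pi.single i 1, 0) ^ 2) * cwf lam s t ^ 2 :=
    mul_nonneg (mul_nonneg (mul_nonneg hμ₁.le hσpos.le) hGnn) hφ2pos.le
  nlinarith [f1, p1, p2, p3, p4]
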